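/- Let S ⊆ F_{q^n} be an F_q-linear Sidon space and let x_1, x_2, x_3 and y_1, y_2, y_3 be elements of S with x_1, x_2, x_3 distinct and y_1, y_2, y_3 distinct. If (y_1 - y_2)(x_2 - x_3) = (y_2 - y_3)(x_1 - x_2), then there exists a nonzero λ ∈ F_q such that λ(y_1 - y_2) = y_2 - y_3 or λ(y_1 - y_2) = x_1 - x_2. -/
import Mathlib


/-- An `F`-linear subspace `S` of `K` is a *Sidon space* if whenever nonzero
`a, b, c, d ∈ S` satisfy `ab = cd`, we have `{aF, bF} = {cF, dF}` as sets of
one-dimensional `F`-subspaces. -/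
def IsSidonSpace (F : Type*) {K : Type*} [Field F] [Field K] [Algebra F K]
    (S : Submodule F K) : Prop :=
  ∀ a b c d : K, a ∈ S → b ∈ S → c ∈ S → d ∈ S →
    a ≠ 0 → b ≠ 0 → c ≠ 0 → d ≠ 0 → a * b = c * d →
    ({Submodule.span F {a}, Submodule.span F {b}} : Set (Submodule F K)) =
      {Submodule.span F {c}, Submodule.span F {d}}

/-- If `x_1,x_2,x_3` and `y_1,y_2,y_3` are elements of a Sidon space `S`, each triple
consisting of distinct elements, and `(y_1-y_2)(x_2-x_3) = (y_2-y_3)(x_1-x_2)`, then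
there is a nonzero `λ ∈ F` with `λ(y_1-y_2) = y_2-y_3` or `λ(y_1-y_2) = x_1-x_2`. -/
theorem sidon_space_scalar_relation {F K : Type*} [Field F] [Field K] [Algebra F K]
    (S : Submodule F K) (hS : IsSidonSpace F S)
    (x1 x2 x3 y1 y2 y3 : K)
    (hx1 : x1 ∈ S) (hx2 : x2 ∈ S) (hx3 : x3 ∈ S)
    (hy1 : y1 ∈ S) (hy2 : y2 ∈ S) (hy3 : y3 ∈ S)
    (hxd : x1 ≠ x2 ∧ x1 ≠ x3 ∧ x2 ≠ x3)
    (hyd : y1 ≠ y2 ∧ y1 ≠ y3 ∧ y2 ≠ y3)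
    (heq : (y1 - y2) * (x2 - x3) = (y2 - y3) * (x1 - x2)) :
    ∃ lam : F, lam ≠ 0 ∧
      (lam • (y1 - y2) = y2 - y3 ∨ lam • (y1 - y2) = x1 - x2) := by
  obtain ⟨hx12, hx13, hx23⟩ := hxd
  obtain ⟨hy12, hy13, hy23⟩ := hyd
  have ha : y1 - y2 ≠ 0 := sub_ne_zero.mpr hy12
  have hb : x2 - x3 ≠ 0 := sub_ne_zero.mpr hx23
  have hc : y2 - y3 ≠ 0 := sub_ne_zero.mpr hy23
  have hd : x1 - x2 ≠ 0 := sub_ne_zero.mpr hx12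
  have hset := hS (y1 - y2) (x2 - x3) (y2 - y3) (x1 - x2)
    (S.sub_mem hy1 hy2) (S.sub_mem hx2 hx3) (S.sub_mem hy2 hy3) (S.sub_mem hx1 hx2)
    ha hb hc hd heq
  have hmem : Submodule.span F {y1 - y2} = Submodule.span F {y2 - y3} ∨
      Submodule.span F {y1 - y2} = Submodule.span F {x1 - x2} := by
    have : Submodule.span F {y1 - y2} ∈
        ({Submodule.span F {y2 - y3}, Submodule.span F {x1 - x2}} : Set (Submodule F K)) := by
      rw [← hset]; left; rfl
    simpa using this
  rcases hmem with h | h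
  · have : y2 - y3 ∈ Submodule.span F {y1 - y2} := by
      rw [h]; exact Submodule.mem_span_singleton_self _
    obtain ⟨lam, hlam⟩ := Submodule.mem_span_singleton.mp this
    refine ⟨lam, ?_, Or.inl hlam⟩
    rintro rfl
    rw [zero_smul] at hlam
    exact hc hlam.symm
  · have : x1 - x2 ∈ Submodule.span F {y1 - y2} := by
      rw [h]; exact Submodule.mem_span_singleton_self _
    obtain ⟨lam, hlam⟩ := Submodule.mem_span_singleton.mp this
    refine ⟨lam, ?_, Or.inr hlam⟩
    rintro rfl
    rw [zero_smul] at hlam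
    exact hd hlam.symm
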